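/- arXiv:2007.10792 — 7 statements merged into one kernel-verified Lean document; each statement's English description precedes it below -/
import Mathlib

section
/- Let G be an abelian group and M ⊆ G a finitely generated sharp submonoid (M ∩ (−M) = {0}). Then there exists an additive monoid homomorphism u : M → ℕ such that u(m) = 0 implies m = 0. -/
open Finset

/-- Choose `t` above finitely many lower bounds `L i` and below `C`. -/
lemma exists_between_bounds {n : ℕ} (L : Fin n → ℚ) (C : ℚ) (h : ∀ i, L i < C) :
    ∃ t : ℚ, (∀ i, L i < t) ∧ t < C := by
  classical
  set B := (univ : Finset (Fin n)).fold max (C - 1) L with hB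
  have hB1 : ∀ i, L i ≤ B := fun i =>
    (Finset.le_fold_max _).mpr (Or.inr ⟨i, mem_univ i, le_rfl⟩)
  have hB2 : B < C := (Finset.fold_max_lt _).mpr ⟨by linarith, fun i _ => h i⟩
  exact ⟨(B + C) / 2, fun i => by have := hB1 i; linarith, by linarith⟩

lemma exists_above_bounds {n : ℕ} (L : Fin n → ℚ) : ∃ t : ℚ, ∀ i, L i < t := by
  classical
  obtain ⟨t, ht, -⟩ := exists_between_bounds L (((univ : Finset (Fin n)).fold max 0 L) + 1)
    (fun i => by
      have : L i ≤ (univ : Finset (Fin n)).fold max 0 L :=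
        (Finset.le_fold_max _).mpr (Or.inr ⟨i, mem_univ i, le_rfl⟩)
      linarith)
  exact ⟨t, ht⟩

/-- Gordan-type lemma: if the vectors `v i` in a `ℚ`-vector space admit no nontrivial
nonnegative rational relation, then some linear functional is positive on all of them. -/
lemma gordan {V : Type*} [AddCommGroup V] [Module ℚ V] :
    ∀ (n : ℕ) (v : Fin n → V),
      (∀ c : Fin n → ℚ, (∀ i, 0 ≤ c i) → ∑ i, c i • v i = 0 → ∀ i, c i = 0) →
      ∃ ℓ : Module.Dual ℚ V, ∀ i, 0 < ℓ (v i) := by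
  intro n
  induction n with
  | zero => exact fun v _ => ⟨0, fun i => i.elim0⟩
  | succ n ih =>
    intro v hv
    set z := v (Fin.last n) with hzdef
    -- the induction hypothesis applies to the first `n` vectors
    have hvc : ∀ c : Fin n → ℚ, (∀ i, 0 ≤ c i) →
        ∑ i, c i • v i.castSucc = 0 → ∀ i, c i = 0 := by
      intro c hc hsum i
      have h1 : ∀ j, 0 ≤ (Fin.snoc c 0 : Fin (n+1) → ℚ) j := by
        intro j
        refine Fin.lastCases ?_ ?_ j
        · simp
        · intro k; simpa using hc k
      have h2 : ∑ j, (Fin.snoc c 0 : Fin (n+1) → ℚ) j • v j = 0 := by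
        rw [Fin.sum_univ_castSucc]
        simpa using hsum
      have := hv (Fin.snoc c 0) h1 h2 i.castSucc
      simpa using this
    obtain ⟨ℓ, hℓ⟩ := ih (fun i => v i.castSucc) hvc
    by_cases hzp : 0 < ℓ z
    · refine ⟨ℓ, fun i => ?_⟩
      refine Fin.lastCases ?_ ?_ i
      · exact hzp
      · exact hℓ
    · push_neg at hzp
      set lam : ℚ := -ℓ z with hlamdef
      have hlam0 : 0 ≤ lam := by simp [hlamdef]; linarith
      -- auxiliary vectors in (a hyperplane)
      set w : Fin n → V := fun i => ℓ (v i.castSucc) • z + lam • v i.castSucc with hwdef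
      have hw : ∀ c : Fin n → ℚ, (∀ i, 0 ≤ c i) → ∑ i, c i • w i = 0 → ∀ i, c i = 0 := by
        intro c hc hsum
        set C' : Fin (n + 1) → ℚ :=
          Fin.snoc (fun i => c i * lam) (∑ i, c i * ℓ (v i.castSucc)) with hC'
        have h1 : ∀ j, 0 ≤ C' j := by
          intro j
          refine Fin.lastCases ?_ ?_ j
          · simp only [hC', Fin.snoc_last]
            exact Finset.sum_nonneg fun i _ => mul_nonneg (hc i) (hℓ i).le
          · intro k
            simp only [hC', Fin.snoc_castSucc]
            exact mul_nonneg (hc k) hlam0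
        have h2 : ∑ j, C' j • v j = 0 := by
          rw [Fin.sum_univ_castSucc]
          simp only [hC', Fin.snoc_castSucc, Fin.snoc_last, ← hzdef]
          rw [← hsum]
          rw [Finset.sum_smul]
          rw [← Finset.sum_add_distrib]
          refine Finset.sum_congr rfl fun i _ => ?_
          simp only [hwdef, smul_add, smul_smul]
          ring_nf
          abel
        have hlast := hv C' h1 h2 (Fin.last n)
        simp only [hC', Fin.snoc_last] at hlast
        -- each summand is zero
        have hzero : ∀ i ∈ univ, c i * ℓ (v i.castSucc) = 0 := by
          rw [← Finset.sum_eq_zero_iff_of_nonneg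
            (fun i _ => mul_nonneg (hc i) (hℓ i).le)]
          exact hlast
        intro i
        have := hzero i (mem_univ i)
        have hne : ℓ (v i.castSucc) ≠ 0 := ne_of_gt (hℓ i)
        exact (mul_eq_zero.mp this).resolve_right hne
      obtain ⟨ℓ', hℓ'⟩ := ih w hw
      have hki : ∀ i : Fin n, 0 < ℓ (v i.castSucc) * ℓ' z + lam * ℓ' (v i.castSucc) := by
        intro i
        have := hℓ' i
        simpa [hwdef, smul_eq_mul] using this
      by_cases hlam : lam = 0
      · rcases Nat.eq_zero_or_pos n with hn | hn
        · -- a single nonzero vector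
          subst hn
          have hzne : z ≠ 0 := by
            intro h0
            have := hv (fun _ => 1) (fun _ => zero_le_one)
              (by
                rw [Fin.sum_univ_one]
                simp [show v 0 = z from by rw [hzdef]; congr, h0]) 0
            norm_num at this
          obtain ⟨φ, hφ⟩ : ∃ φ : Module.Dual ℚ V, φ z ≠ 0 := by
            by_contra hcon
            push_neg at hcon
            exact hzne ((Module.forall_dual_apply_eq_zero_iff ℚ z).mp hcon)
          rcases hφ.lt_or_gt with h | h
          · refine ⟨-φ, fun i => ?_⟩
            have : v i = z := by rw [hzdef]; congr; exact Fin.ext (by omega)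
            rw [this]; simpa using h
          · refine ⟨φ, fun i => ?_⟩
            have : v i = z := by rw [hzdef]; congr; exact Fin.ext (by omega)
            rw [this]; exact h
        · -- `ℓ z = 0`, and `ℓ' z > 0` follows from any index
          have hlz : ℓ z = 0 := by
            have : -ℓ z = 0 := hlam ▸ hlamdef ▸ rfl
            linarith
          have i0 : Fin n := ⟨0, hn⟩
          have hz' : 0 < ℓ' z := by
            have h1 := hki i0
            rw [hlam] at h1
            have h2 := hℓ i0
            nlinarith
          obtain ⟨t, ht⟩ := exists_above_bounds
            (fun i => -ℓ' (v i.castSucc) / ℓ (v i.castSucc))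
          refine ⟨ℓ' + t • ℓ, fun i => ?_⟩
          refine Fin.lastCases ?_ ?_ i
          · simp only [LinearMap.add_apply, LinearMap.smul_apply, smul_eq_mul, ← hzdef, hlz]
            linarith
          · intro j
            have h1 := ht j
            have h2 := hℓ j
            rw [div_lt_iff₀ h2] at h1
            simp only [LinearMap.add_apply, LinearMap.smul_apply, smul_eq_mul]
            nlinarith
      · have hlam' : 0 < lam := lt_of_le_of_ne hlam0 (Ne.symm hlam)
        have hLC : ∀ i : Fin n, -ℓ' (v i.castSucc) / ℓ (v i.castSucc) < ℓ' z / lam := by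
          intro i
          rw [div_lt_div_iff₀ (hℓ i) hlam']
          nlinarith [hki i]
        obtain ⟨t, ht1, ht2⟩ := exists_between_bounds _ _ hLC
        refine ⟨ℓ' + t • ℓ, fun i => ?_⟩
        refine Fin.lastCases ?_ ?_ i
        · have h1 : t * lam < ℓ' z := by
            rw [lt_div_iff₀ hlam'] at ht2; linarith
          simp only [LinearMap.add_apply, LinearMap.smul_apply, smul_eq_mul, ← hzdef]
          have : ℓ z = -lam := by rw [hlamdef]; ring
          rw [this]; linarith
        · intro j
          have h1 := ht1 j
          have h2 := hℓ j
          rw [div_lt_iff₀ h2] at h1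
          simp only [LinearMap.add_apply, LinearMap.smul_apply, smul_eq_mul]
          nlinarith

lemma den_mul_int (q : ℚ) (N : ℕ) (h : q.den ∣ N) : ∃ z : ℤ, (N : ℚ) * q = (z : ℚ) := by
  obtain ⟨k, hk⟩ := h
  refine ⟨(k : ℤ) * q.num, ?_⟩
  have hden : ((q.den : ℚ)) ≠ 0 := by exact_mod_cast q.den_ne_zero
  have hq : (q.num : ℚ) = q * q.den := by
    exact (Rat.mul_den_eq_num q).symm
  push_cast
  rw [hq, hk]
  push_cast
  ring

/-- A finitely generated sharp submonoid `M` of an abelian group `G` admits a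
monoid homomorphism `u : M → ℕ` with `u m = 0 → m = 0` (a local homomorphism to `ℕ`). -/
theorem exists_local_hom_to_nat {G : Type*} [AddCommGroup G] (M : AddSubmonoid G)
    (hfg : M.FG) (hsharp : ∀ g ∈ M, -g ∈ M → g = 0) :
    ∃ u : M →+ ℕ, ∀ m : M, u m = 0 → m = 0 := by
  classical
  obtain ⟨s, hs⟩ := hfg
  set t : Finset G := s.erase 0 with htdef
  have hts : AddSubmonoid.closure (t : Set G) = M := by
    rw [← hs]
    apply le_antisymm
    · exact AddSubmonoid.closure_mono (fun x hx => Finset.mem_of_mem_erase hx)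
    · rw [AddSubmonoid.closure_le]
      intro x hx
      by_cases hx0 : x = 0
      · simpa [hx0] using (AddSubmonoid.closure (t : Set G)).zero_mem
      · exact AddSubmonoid.subset_closure (Finset.mem_erase.mpr ⟨hx0, hx⟩)
  -- M has no torsion elements
  have hkill : ∀ x ∈ M, ∀ k : ℕ, k ≠ 0 → k • x = 0 → x = 0 := by
    intro x hx k hk h0
    obtain ⟨k, rfl⟩ := Nat.exists_eq_succ_of_ne_zero hk
    have hxx : x + k • x = 0 := by rw [add_comm, ← succ_nsmul]; exact h0
    have hneg : -x = k • x := neg_eq_of_add_eq_zero_right hxx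
    exact hsharp x hx (by rw [hneg]; exact AddSubmonoid.nsmul_mem M hx k)
  set H : AddSubgroup G := AddSubgroup.closure (s : Set G) with hHdef
  have hMH : ∀ x ∈ M, x ∈ H := by
    intro x hx
    rw [← hs] at hx
    exact (AddSubmonoid.closure_le.mpr
      (fun y hy => AddSubgroup.subset_closure hy : (s : Set G) ⊆ (H.toAddSubmonoid : Set G))) hx
  haveI hHfg : AddGroup.FG ↥H := (AddGroup.fg_iff_addSubgroup_fg H).mpr ⟨s, rfl⟩
  haveI : Module.Finite ℤ ↥H := Module.Finite.iff_addGroup_fg.mpr hHfg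
  set T : Submodule ℤ ↥H := Submodule.torsion ℤ ↥H with hTdef
  haveI : Module.Finite ℤ (↥H ⧸ T) :=
    Module.Finite.of_surjective T.mkQ (Submodule.mkQ_surjective T)
  set b := Module.Free.chooseBasis ℤ (↥H ⧸ T) with hbdef
  set ι := Module.Free.ChooseBasisIndex ℤ (↥H ⧸ T) with hιdef
  set n : ℕ := t.card with hndef
  set e : ↥t ≃ Fin n := t.equivFin with hedef
  set m : Fin n → G := fun i => ((e.symm i : ↥t) : G) with hmdef
  have hmt : ∀ i, m i ∈ t := fun i => Finset.coe_mem _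
  have hms : ∀ i, m i ∈ s := fun i => Finset.mem_of_mem_erase (hmt i)
  have hmH : ∀ i, m i ∈ H := fun i => AddSubgroup.subset_closure (hms i)
  have hmM : ∀ i, m i ∈ M := fun i => hs ▸ AddSubmonoid.subset_closure (hms i)
  have hmne : ∀ i, m i ≠ 0 := fun i => (Finset.mem_erase.mp (hmt i)).1
  set mH : Fin n → ↥H := fun i => ⟨m i, hmH i⟩ with hmHdef
  set q : Fin n → (↥H ⧸ T) := fun i => T.mkQ (mH i) with hqdef
  set v : Fin n → (ι → ℚ) := fun i j => ((b.repr (q i)) j : ℚ) with hvdef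
  -- Gordan hypothesis: no nontrivial nonnegative relation among the `v i`
  have hyp : ∀ c : Fin n → ℚ, (∀ i, 0 ≤ c i) → ∑ i, c i • v i = 0 → ∀ i, c i = 0 := by
    intro c hc hsum
    by_contra hcon
    push_neg at hcon
    obtain ⟨i0, hi0⟩ := hcon
    have hi0' : 0 < c i0 := lt_of_le_of_ne (hc i0) (Ne.symm hi0)
    set N : ℕ := ∏ i, (c i).den with hN
    have hNpos : 0 < N := Finset.prod_pos fun i _ => (c i).pos
    have hdz : ∀ i, ∃ zz : ℤ, ((N : ℚ) * c i = (zz : ℚ)) :=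
      fun i => den_mul_int _ _ (Finset.dvd_prod_of_mem _ (mem_univ i))
    choose z hz using hdz
    have hz0 : ∀ i, 0 ≤ z i := by
      intro i
      have h1 : (0 : ℚ) ≤ (z i : ℚ) := by
        rw [← hz i]
        exact mul_nonneg (by positivity) (hc i)
      exact_mod_cast h1
    set d : Fin n → ℕ := fun i => (z i).toNat with hd
    have hdq : ∀ i, ((d i : ℚ)) = (N : ℚ) * c i := by
      intro i
      rw [hz i, hd]
      norm_cast
      exact Int.toNat_of_nonneg (hz0 i)
    have hdi0 : 0 < d i0 := by
      have h1 : (0 : ℚ) < (d i0 : ℚ) := by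
        rw [hdq i0]
        have : (0:ℚ) < N := by exact_mod_cast hNpos
        exact mul_pos this hi0'
      exact_mod_cast h1
    set xH : ↥H := ∑ i, (d i : ℤ) • mH i with hxHdef
    have hreprj : ∀ j, (b.repr (T.mkQ xH)) j = ∑ i, (d i : ℤ) * (b.repr (q i)) j := by
      intro j
      rw [hxHdef, map_sum, map_sum, Finset.sum_apply']
      refine Finset.sum_congr rfl fun i _ => ?_
      rw [map_smul, map_smul, Finsupp.smul_apply, smul_eq_mul]
    have hjz : ∀ j, (b.repr (T.mkQ xH)) j = 0 := by
      intro j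
      have h1 : ∑ i, c i * v i j = 0 := by
        have h2 := congrFun hsum j
        simpa [Finset.sum_apply, smul_eq_mul] using h2
      have h2 : ∑ i, ((d i : ℚ)) * v i j = 0 := by
        calc ∑ i, ((d i : ℚ)) * v i j = (N : ℚ) * ∑ i, c i * v i j := by
              rw [Finset.mul_sum]
              exact Finset.sum_congr rfl fun i _ => by rw [hdq i]; ring
          _ = 0 := by rw [h1, mul_zero]
      have h3 : ((∑ i, (d i : ℤ) * (b.repr (q i)) j : ℤ) : ℚ) = 0 := by
        push_cast
        exact h2
      rw [hreprj j]
      exact_mod_cast h3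
    have hqz : T.mkQ xH = 0 := by
      have h4 : b.repr (T.mkQ xH) = 0 := by
        ext j; exact hjz j
      exact (LinearEquiv.map_eq_zero_iff b.repr).mp h4
    have hmem : xH ∈ T := by
      rw [← Submodule.Quotient.mk_eq_zero T]
      rw [← Submodule.mkQ_apply]
      exact hqz
    rw [hTdef] at hmem
    obtain ⟨a, ha⟩ := (Submodule.mem_torsion_iff _).mp hmem
    set X : G := ∑ i, d i • m i with hXdef
    have hXM : X ∈ M := AddSubmonoid.sum_mem M fun i _ => AddSubmonoid.nsmul_mem M (hmM i) (d i)
    have hXxH : (xH : G) = X := by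
      rw [hxHdef, hXdef]
      rw [← AddSubgroup.coe_subtype, map_sum]
      refine Finset.sum_congr rfl fun i _ => ?_
      rw [map_zsmul]
      rw [AddSubgroup.coe_subtype]
      rw [natCast_zsmul]
    have haX : (a : ℤ) • X = 0 := by
      have h5 := congrArg (Subtype.val) ha
      rw [Submonoid.smul_def] at h5
      simpa [hXxH] using h5
    have hane : (a : ℤ) ≠ 0 := mem_nonZeroDivisors_iff_ne_zero.mp a.2
    have hXz : X = 0 := by
      apply hkill X hXM (a : ℤ).natAbs (Int.natAbs_ne_zero.mpr hane)
      rcases Int.natAbs_eq (a : ℤ) with h | h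
      · rw [← natCast_zsmul, ← h]; exact haX
      · rw [← natCast_zsmul, ← neg_neg ((((a:ℤ).natAbs : ℤ)) • X), ← neg_zsmul, ← h]
        rw [haX, neg_zero]
    obtain ⟨k, hk⟩ := Nat.exists_eq_succ_of_ne_zero (Nat.pos_iff_ne_zero.mp hdi0)
    have hsplit : X = m i0 + (k • m i0 + ∑ i ∈ univ.erase i0, d i • m i) := by
      rw [hXdef, ← Finset.add_sum_erase _ _ (mem_univ i0), hk, succ_nsmul']
      rw [add_assoc]
    have hnegmem : -(m i0) ∈ M := by
      have h6 : m i0 + (k • m i0 + ∑ i ∈ univ.erase i0, d i • m i) = 0 := by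
        rw [← hsplit]; exact hXz
      rw [neg_eq_of_add_eq_zero_right h6]
      exact AddSubmonoid.add_mem M (AddSubmonoid.nsmul_mem M (hmM i0) k)
        (AddSubmonoid.sum_mem M fun i _ => AddSubmonoid.nsmul_mem M (hmM i) (d i))
    exact hmne i0 (hsharp _ (hmM i0) hnegmem)
  obtain ⟨ℓ, hℓ⟩ := gordan n v hyp
  -- turn the rational functional into an integral one
  set wq : ι → ℚ := fun j => ℓ (fun k => if j = k then (1 : ℚ) else 0) with hwq
  have hrep : ∀ x : ι → ℚ, ℓ x = ∑ j, x j * wq j := by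
    intro x
    simpa [smul_eq_mul] using LinearMap.pi_apply_eq_sum_univ ℓ x
  set D : ℕ := ∏ j, (wq j).den with hD
  have hDpos : 0 < D := Finset.prod_pos fun j _ => (wq j).pos
  have hWe : ∀ j, ∃ zz : ℤ, (D : ℚ) * wq j = (zz : ℚ) :=
    fun j => den_mul_int _ _ (Finset.dvd_prod_of_mem _ (mem_univ j))
  choose W hWeq using hWe
  set lZ : (↥H ⧸ T) →ₗ[ℤ] ℤ := ∑ j, W j • b.coord j with hlZ
  have hlZapp : ∀ y : ↥H ⧸ T, lZ y = ∑ j, W j * (b.repr y) j := by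
    intro y
    rw [hlZ]
    rw [LinearMap.sum_apply]
    exact Finset.sum_congr rfl fun j _ => by
      rw [LinearMap.smul_apply, smul_eq_mul, Module.Basis.coord_apply]
  have hpos : ∀ i, 0 < lZ (q i) := by
    intro i
    have h1 : (0 : ℚ) < (D : ℚ) * ℓ (v i) := by
      have : (0:ℚ) < D := by exact_mod_cast hDpos
      exact mul_pos this (hℓ i)
    have h2 : ((lZ (q i) : ℤ) : ℚ) = (D : ℚ) * ℓ (v i) := by
      rw [hlZapp, hrep (v i), Finset.mul_sum]
      push_cast
      refine Finset.sum_congr rfl fun j _ => ?_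
      rw [← hWeq j]
      have : v i j = ((b.repr (q i)) j : ℚ) := rfl
      rw [this]; ring
    have h3 : (0:ℚ) < ((lZ (q i) : ℤ) : ℚ) := h2 ▸ h1
    exact_mod_cast h3
  set F : ↥H →+ ℤ := (lZ.comp T.mkQ).toAddMonoidHom with hF
  have hFapp : ∀ x : ↥H, F x = lZ (T.mkQ x) := fun x => rfl
  -- key positivity on M
  have key : ∀ x (hx : x ∈ M),
      x ∈ H ∧ ∀ hxH : x ∈ H, 0 ≤ F ⟨x, hxH⟩ ∧ (F ⟨x, hxH⟩ = 0 → x = 0) := by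
    intro x hx
    rw [← hts] at hx
    refine AddSubmonoid.closure_induction ?_ ?_ ?_ hx
    · -- generators
      intro y hy
      have hyt : y ∈ t := hy
      refine ⟨AddSubgroup.subset_closure (Finset.mem_of_mem_erase hyt), ?_⟩
      intro hyH
      have hym : m (e ⟨y, hyt⟩) = y := by
        rw [hmdef]
        simp [Equiv.symm_apply_apply]
      have hsub : (⟨y, hyH⟩ : ↥H) = mH (e ⟨y, hyt⟩) := by
        apply Subtype.ext
        simp [hmHdef, hym]
      have hq' : F ⟨y, hyH⟩ = lZ (q (e ⟨y, hyt⟩)) := by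
        rw [hFapp, hsub, hqdef]
      constructor
      · rw [hq']; exact (hpos _).le
      · intro h0
        rw [hq'] at h0
        exact absurd h0 (ne_of_gt (hpos _))
    · -- zero
      refine ⟨H.zero_mem, fun hxH => ?_⟩
      have : (⟨(0:G), hxH⟩ : ↥H) = 0 := Subtype.ext rfl
      rw [this]
      simp
    · -- addition
      rintro y z' hy hz ⟨hyH, hyP⟩ ⟨hzH, hzP⟩
      refine ⟨AddSubgroup.add_mem H hyH hzH, fun hxH => ?_⟩
      have hsub : (⟨y + z', hxH⟩ : ↥H) = ⟨y, hyH⟩ + ⟨z', hzH⟩ := Subtype.ext rfl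
      rw [hsub, map_add]
      obtain ⟨hy0, hy1⟩ := hyP hyH
      obtain ⟨hz0, hz1⟩ := hzP hzH
      refine ⟨by linarith, fun h0 => ?_⟩
      have hyy : F ⟨y, hyH⟩ = 0 := by omega
      have hzz : F ⟨z', hzH⟩ = 0 := by omega
      rw [hy1 hyy, hz1 hzz, add_zero]
  -- the homomorphism to ℕ
  refine ⟨{ toFun := fun x => (F ⟨x.1, hMH x.1 x.2⟩).toNat
            map_zero' := ?_
            map_add' := ?_ }, ?_⟩
  · show (F ⟨((0 : M) : G), hMH _ (0:M).2⟩).toNat = 0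
    have h9 : (⟨((0 : M) : G), hMH _ (0:M).2⟩ : ↥H) = 0 := Subtype.ext rfl
    rw [h9, map_zero]
    rfl
  · intro a c
    have hsub : (⟨((a + c : M) : G), hMH _ (a+c).2⟩ : ↥H)
        = ⟨(a : G), hMH _ a.2⟩ + ⟨(c : G), hMH _ c.2⟩ := Subtype.ext rfl
    have ha0 := ((key (a : G) a.2).2 (hMH _ a.2)).1
    have hc0 := ((key (c : G) c.2).2 (hMH _ c.2)).1
    simp only [hsub, map_add]
    exact Int.toNat_add ha0 hc0
  · intro x hx
    simp only [AddMonoidHom.coe_mk, ZeroHom.coe_mk] at hx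
    have h0 : F ⟨(x : G), hMH _ x.2⟩ = 0 := by
      have h1 := ((key (x : G) x.2).2 (hMH _ x.2)).1
      omega
    exact Subtype.ext (((key (x : G) x.2).2 (hMH _ x.2)).2 h0)
end

section
/- Let G be an abelian group, M ⊆ G a sharp submonoid (M ∩ (−M) = {0}), and F ⊆ M a face of M, i.e. a submonoid of M such that whenever a, b ∈ M and a + b ∈ F, then a ∈ F. Let L ∈ F and suppose x ∈ G satisfies x − n•L ∈ M and m•L − x ∈ M for some integers n, m (i.e. x is bounded by L for the order x ≤ y iff y − x ∈ M). Then x belongs to the subgroup of G generated by F. -/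
/-- Let `M` be a sharp submonoid of an abelian group `G` and `F ⊆ M` a face of
`M`.  If `L ∈ F` and `x ∈ G` is bounded by `L` (i.e. `n • L ≤ x ≤ m • L` for some integers
`n, m`, where `x ≤ y ↔ y - x ∈ M`), then `x` lies in the subgroup of `G` generated by `F`. -/
theorem bounded_by_face_mem_closure {G : Type*} [AddCommGroup G] (M : AddSubmonoid G)
    (hsharp : ∀ g ∈ M, -g ∈ M → g = 0)
    (F : AddSubmonoid G) (hFM : F ≤ M)
    (hface : ∀ a ∈ M, ∀ b ∈ M, a + b ∈ F → a ∈ F)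
    (L : G) (hL : L ∈ F) (x : G) (n m : ℤ)
    (hn : x - n • L ∈ M) (hm : m • L - x ∈ M) :
    x ∈ AddSubgroup.closure (F : Set G) := by
  have hsum : (x - n • L) + (m • L - x) = (m - n) • L := by
    rw [sub_smul]; abel
  have hkey : (m - n) • L ∈ F := by
    rcases le_or_gt 0 (m - n) with h | h
    · lift m - n to ℕ using h with k hk
      rw [natCast_zsmul]
      exact F.nsmul_mem hL k
    · have h1 : (m - n) • L ∈ M := by rw [← hsum]; exact M.add_mem hn hm
      have h2 : -((m - n) • L) ∈ M := by
        rw [← neg_smul, neg_sub]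
        lift n - m to ℕ using by omega with k hk
        rw [natCast_zsmul]
        exact hFM (F.nsmul_mem hL k)
      rw [hsharp _ h1 h2]
      exact F.zero_mem
  have hxF : x - n • L ∈ F := hface _ hn _ hm (by rw [hsum]; exact hkey)
  have hLc : L ∈ AddSubgroup.closure (F : Set G) := AddSubgroup.subset_closure hL
  have : x = (x - n • L) + n • L := by abel
  rw [this]
  exact AddSubgroup.add_mem _ (AddSubgroup.subset_closure hxF)
    (AddSubgroup.zsmul_mem _ hLc n)
end

section
/- For a tropical curve datum (V, E, s, t, G, M, ℓ) and every edge e ∈ E, the group homomorphism H₁ → G given by γ ↦ γ(e) • ℓ(e) has bounded monodromy: for every γ ∈ H₁ one has (−1)•⟨γ, γ⟩ ≤ γ(e)•ℓ(e) ≤ ⟨γ, γ⟩ (for the order x ≤ y iff y − x ∈ M). -/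
namespace TropicalNeron

variable {V E : Type*} [Fintype E]
variable {G : Type*} [AddCommGroup G]

open scoped Classical in
/-- The boundary map `δ : (E → ℤ) → (V → ℤ)` of a graph with source `s` and target `t`. -/
noncomputable def delta (s t : E → V) : (E → ℤ) →+ (V → ℤ) where
  toFun f := fun v => (∑ e, if t e = v then f e else 0) - ∑ e, if s e = v then f e else 0
  map_zero' := by funext v; simp
  map_add' f g := by
    classical
    funext v
    have h : ∀ w : E → V,
        (∑ e, if w e = v then (f + g) e else 0)
          = (∑ e, if w e = v then f e else 0) + ∑ e, if w e = v then g e else 0 := by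
      intro w
      rw [← Finset.sum_add_distrib]
      refine Finset.sum_congr rfl fun e _ => ?_
      by_cases hw : w e = v <;> simp [hw]
    simp only [Pi.add_apply] at *
    rw [h, h]
    ring

/-- The first homology of the graph: the kernel of the boundary map. -/
noncomputable def H1 (s t : E → V) : AddSubgroup (E → ℤ) := (delta s t).ker

/-- The monodromy pairing `⟨γ, γ'⟩ = ∑ e, γ(e)·γ'(e) • ℓ(e)`. -/
def pairing (ℓ : E → G) (γ γ' : E → ℤ) : G := ∑ e, (γ e * γ' e) • ℓ e

/-- Pairing with a fixed cycle `γ`, as a homomorphism `H₁ → G`. -/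
noncomputable def periodHom (s t : E → V) (ℓ : E → G) (γ : H1 s t) : ↥(H1 s t) →+ G where
  toFun γ' := pairing ℓ γ γ'
  map_zero' := by simp [pairing]
  map_add' γ₁ γ₂ := by
    simp only [pairing, AddSubgroup.coe_add, Pi.add_apply, mul_add, add_smul]
    rw [Finset.sum_add_distrib]

/-- The period map `H₁ → Hom(H₁, G)`, `γ ↦ ⟨γ, −⟩`. -/
noncomputable def periodMap (s t : E → V) (ℓ : E → G) : ↥(H1 s t) →+ (↥(H1 s t) →+ G) where
  toFun := periodHom s t ℓ
  map_zero' := by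
    ext γ'
    simp [periodHom, pairing]
  map_add' γ₁ γ₂ := by
    ext γ'
    simp only [periodHom, AddMonoidHom.coe_mk, ZeroHom.coe_mk, AddMonoidHom.add_apply,
      pairing, AddSubgroup.coe_add, Pi.add_apply, add_mul, add_smul]
    rw [Finset.sum_add_distrib]

/-- `a` is bounded by `b` for the order `x ≤ y ↔ y - x ∈ M`. -/
def Bounded (M : AddSubmonoid G) (b a : G) : Prop :=
  ∃ n m : ℤ, a - n • b ∈ M ∧ m • b - a ∈ M

/-- A homomorphism `φ : H₁ → G` has bounded monodromy if `φ(γ)` is bounded by `⟨γ,γ⟩`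
for every `γ ∈ H₁`. -/
def BoundedMonodromy (s t : E → V) (M : AddSubmonoid G) (ℓ : E → G)
    (φ : ↥(H1 s t) →+ G) : Prop :=
  ∀ γ : H1 s t, Bounded M (pairing ℓ γ γ) (φ γ)

/-- The subgroup `Hom(H₁,G)† ⊆ Hom(H₁,G)` of bounded-monodromy homomorphisms. -/
noncomputable def BMHom (s t : E → V) (M : AddSubmonoid G) (ℓ : E → G) :
    AddSubgroup (↥(H1 s t) →+ G) where
  carrier := {φ | BoundedMonodromy s t M ℓ φ}
  zero_mem' := fun γ => ⟨0, 0, by simpa using M.zero_mem, by simpa using M.zero_mem⟩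
  add_mem' := by
    rintro φ ψ hφ hψ γ
    obtain ⟨n, m, h1, h2⟩ := hφ γ
    obtain ⟨n', m', h1', h2'⟩ := hψ γ
    refine ⟨n + n', m + m', ?_, ?_⟩
    · have h := AddSubmonoid.add_mem _ h1 h1'
      have e : φ γ - n • pairing ℓ γ γ + (ψ γ - n' • pairing ℓ γ γ)
          = (φ + ψ) γ - (n + n') • pairing ℓ γ γ := by
        rw [AddMonoidHom.add_apply, add_smul]; abel
      rwa [e] at h
    · have h := AddSubmonoid.add_mem _ h2 h2'
      have e : m • pairing ℓ γ γ - φ γ + (m' • pairing ℓ γ γ - ψ γ)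
          = (m + m') • pairing ℓ γ γ - (φ + ψ) γ := by
        rw [AddMonoidHom.add_apply, add_smul]; abel
      rwa [e] at h
  neg_mem' := by
    rintro φ hφ γ
    obtain ⟨n, m, h1, h2⟩ := hφ γ
    refine ⟨-m, -n, ?_, ?_⟩
    · have e : m • pairing ℓ γ γ - φ γ = (-φ) γ - (-m) • pairing ℓ γ γ := by
        rw [AddMonoidHom.neg_apply, neg_smul]; abel
      rwa [e] at h2
    · have e : φ γ - n • pairing ℓ γ γ = (-n) • pairing ℓ γ γ - (-φ) γ := by
        rw [AddMonoidHom.neg_apply, neg_smul]; abel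
      rwa [e] at h1

/-- The subgroup of `Hom(H₁,G)†` of homomorphisms of the form `⟨γ, −⟩`. -/
noncomputable def periods (s t : E → V) (M : AddSubmonoid G) (ℓ : E → G) :
    AddSubgroup ↥(BMHom s t M ℓ) :=
  AddSubgroup.comap (BMHom s t M ℓ).subtype (periodMap s t ℓ).range

/-- The tropical Jacobian `TroPic⁰ = Hom(H₁,G)† / {⟨γ,−⟩ : γ ∈ H₁}`. -/
noncomputable abbrev TroPic0 (s t : E → V) (M : AddSubmonoid G) (ℓ : E → G) :=
  ↥(BMHom s t M ℓ) ⧸ periods s t M ℓ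

/-- The standard hypotheses on a tropical curve datum: `M` is a sharp, saturated,
generating submonoid of `G`, and all edge lengths lie in `M` and are nonzero. -/
def IsTropicalCurveDatum (s t : E → V) (M : AddSubmonoid G) (ℓ : E → G) : Prop :=
  (∀ g ∈ M, -g ∈ M → g = 0) ∧
  (∀ (g : G) (n : ℕ), 1 ≤ n → (n : ℤ) • g ∈ M → g ∈ M) ∧
  (∀ g : G, ∃ a ∈ M, ∃ b ∈ M, g = a - b) ∧
  (∀ e, ℓ e ∈ M) ∧
  (∀ e, ℓ e ≠ 0)

/-- Pairing with a single edge `e`: the homomorphism `H₁ → G`, `γ ↦ γ(e) • ℓ(e)`. -/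
noncomputable def edgeHom (s t : E → V) (ℓ : E → G) (e : E) : ↥(H1 s t) →+ G where
  toFun γ := (γ : E → ℤ) e • ℓ e
  map_zero' := by simp
  map_add' γ₁ γ₂ := by
    simp only [AddSubgroup.coe_add, Pi.add_apply, add_smul]

private lemma zsmul_mem_of_nonneg {G : Type*} [AddCommGroup G] (M : AddSubmonoid G)
    {g : G} (hg : g ∈ M) {n : ℤ} (hn : 0 ≤ n) : n • g ∈ M := by
  lift n to ℕ using hn
  rw [natCast_zsmul]
  exact AddSubmonoid.nsmul_mem M hg n

private lemma key_mem {E : Type*} [Fintype E] {G : Type*} [AddCommGroup G]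
    (M : AddSubmonoid G) (ℓ : E → G) (hℓM : ∀ e, ℓ e ∈ M) (γ : E → ℤ) (e : E) (ε : ℤ)
    (hε : ε = 1 ∨ ε = -1) :
    pairing ℓ γ γ - ε • (γ e • ℓ e) ∈ M := by
  classical
  have hrep : γ e • ℓ e = ∑ e', (if e' = e then γ e' else 0) • ℓ e' := by
    simp only [ite_smul, zero_smul, Finset.sum_ite_eq' Finset.univ e, Finset.mem_univ, if_pos]
  rw [hrep, Finset.smul_sum, pairing, ← Finset.sum_sub_distrib]
  refine AddSubmonoid.sum_mem M fun e' _ => ?_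
  rw [smul_smul, ← sub_smul]
  refine zsmul_mem_of_nonneg M (hℓM e') ?_
  by_cases h : e' = e
  · simp only [h, if_pos]
    rcases hε with h1 | h1 <;> subst h1 <;> nlinarith [sq_nonneg (γ e - 1), sq_nonneg (γ e + 1)]
  · rw [if_neg h, mul_zero, sub_zero]
    exact mul_self_nonneg _

/-- For a tropical curve datum and an edge `e`, the homomorphism
`γ ↦ γ(e) • ℓ(e)` has bounded monodromy; in fact
`(−1)•⟨γ,γ⟩ ≤ γ(e)•ℓ(e) ≤ 1•⟨γ,γ⟩` for every `γ ∈ H₁`. -/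
theorem edgeHom_boundedMonodromy {V E : Type*} [Fintype V] [Fintype E] [Nonempty V]
    {G : Type*} [AddCommGroup G] (s t : E → V) (M : AddSubmonoid G) (ℓ : E → G)
    (hG : AddGroup.FG G) (hdatum : IsTropicalCurveDatum s t M ℓ) (e : E) :
    BoundedMonodromy s t M ℓ (edgeHom s t ℓ e) ∧
      ∀ γ : H1 s t,
        (γ : E → ℤ) e • ℓ e - (-1 : ℤ) • pairing ℓ γ γ ∈ M ∧
        (1 : ℤ) • pairing ℓ γ γ - (γ : E → ℤ) e • ℓ e ∈ M := by
  obtain ⟨-, -, -, hℓM, -⟩ := hdatum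
  have h2 : ∀ γ : H1 s t,
      (γ : E → ℤ) e • ℓ e - (-1 : ℤ) • pairing ℓ γ γ ∈ M ∧
      (1 : ℤ) • pairing ℓ γ γ - (γ : E → ℤ) e • ℓ e ∈ M := by
    intro γ
    constructor
    · have := key_mem M ℓ hℓM (γ : E → ℤ) e (-1) (Or.inr rfl)
      rw [show (γ : E → ℤ) e • ℓ e - (-1 : ℤ) • pairing ℓ γ γ
          = pairing ℓ (γ : E → ℤ) (γ : E → ℤ) - (-1 : ℤ) • ((γ : E → ℤ) e • ℓ e) by
        simp only [neg_smul, one_smul]; abel]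
      exact this
    · have := key_mem M ℓ hℓM (γ : E → ℤ) e 1 (Or.inl rfl)
      rw [show (1 : ℤ) • pairing ℓ γ γ - (γ : E → ℤ) e • ℓ e
          = pairing ℓ (γ : E → ℤ) (γ : E → ℤ) - (1 : ℤ) • ((γ : E → ℤ) e • ℓ e) by
        simp only [one_smul]]
      exact this
  exact ⟨fun γ => ⟨-1, 1, (h2 γ).1, (h2 γ).2⟩, h2⟩

end TropicalNeron
end

section
/- For a tropical curve datum (V, E, s, t, G, M, ℓ), if γ ∈ H₁ satisfies ⟨γ, γ⟩ = 0 then γ = 0. Consequently, the group homomorphism H₁ → Hom(H₁, G) sending γ to ⟨γ, −⟩ is injective, i.e. the monodromy pairing is nondegenerate. -/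
namespace TropicalNeron

variable {V E : Type*} [Fintype E]
variable {G : Type*} [AddCommGroup G]

lemma sum_eq_zero_of_sharp {G : Type*} [AddCommGroup G] (M : AddSubmonoid G)
    (hsharp : ∀ g ∈ M, -g ∈ M → g = 0) {ι : Type*} (s : Finset ι) (f : ι → G)
    (hmem : ∀ i ∈ s, f i ∈ M) (hsum : ∑ i ∈ s, f i = 0) : ∀ i ∈ s, f i = 0 := by
  classical
  induction s using Finset.induction_on with
  | empty => simp
  | @insert a s hnot ih =>
    rw [Finset.sum_insert hnot] at hsum
    have hrest : ∑ i ∈ s, f i ∈ M := M.sum_mem fun i hi => hmem i (Finset.mem_insert_of_mem hi)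
    have ha : f a ∈ M := hmem a (Finset.mem_insert_self a s)
    have hfa : f a = 0 := hsharp _ ha (by rw [neg_eq_of_add_eq_zero_right hsum]; exact hrest)
    have hsum' : ∑ i ∈ s, f i = 0 := by rw [hfa, zero_add] at hsum; exact hsum
    intro i hi
    rcases Finset.mem_insert.mp hi with rfl | hi
    · exact hfa
    · exact ih (fun j hj => hmem j (Finset.mem_insert_of_mem hj)) hsum' i hi

/-- For a tropical curve datum, `⟨γ,γ⟩ = 0` implies `γ = 0`; consequently the
period map `γ ↦ ⟨γ,−⟩ : H₁ → Hom(H₁, G)` is injective (the monodromy pairing is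
nondegenerate). -/
theorem monodromy_pairing_nondegenerate {V E : Type*} [Fintype V] [Fintype E] [Nonempty V]
    {G : Type*} [AddCommGroup G] (s t : E → V) (M : AddSubmonoid G) (ℓ : E → G)
    (hG : AddGroup.FG G) (hdatum : IsTropicalCurveDatum s t M ℓ) :
    (∀ γ : H1 s t, pairing ℓ (γ : E → ℤ) (γ : E → ℤ) = 0 → γ = 0) ∧
      Function.Injective (periodMap s t ℓ) := by
  obtain ⟨hsharp, hsat, -, hmemM, hne⟩ := hdatum
  have key : ∀ γ : H1 s t, pairing ℓ (γ : E → ℤ) (γ : E → ℤ) = 0 → γ = 0 := by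
    intro γ hγ
    have hterm : ∀ e : E, ((γ : E → ℤ) e * (γ : E → ℤ) e) • ℓ e = 0 := by
      refine fun e => sum_eq_zero_of_sharp M hsharp Finset.univ _ (fun i _ => ?_) hγ e
        (Finset.mem_univ e)
      have : ((γ : E → ℤ) i * (γ : E → ℤ) i) • ℓ i
          = (((γ : E → ℤ) i).natAbs * ((γ : E → ℤ) i).natAbs) • ℓ i := by
        rw [← natCast_zsmul]
        congr 1
        push_cast
        rw [abs_mul_abs_self]
      rw [this]
      exact AddSubmonoid.nsmul_mem M (hmemM i) _
    ext e
    by_contra hne0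
    have h1 : 1 ≤ ((γ : E → ℤ) e).natAbs * ((γ : E → ℤ) e).natAbs :=
      Nat.one_le_iff_ne_zero.mpr (by
        simp only [ne_eq, Nat.mul_eq_zero, Int.natAbs_eq_zero]
        intro h
        rcases h with h | h <;> exact hne0 (by simpa using h))
    have h2 : ((((γ : E → ℤ) e).natAbs * ((γ : E → ℤ) e).natAbs : ℕ) : ℤ) • (-ℓ e) ∈ M := by
      have hz := hterm e
      have heq : ((γ : E → ℤ) e * (γ : E → ℤ) e)
          = ((((γ : E → ℤ) e).natAbs * ((γ : E → ℤ) e).natAbs : ℕ) : ℤ) := by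
        push_cast; rw [abs_mul_abs_self]
      rw [heq] at hz
      rw [smul_neg, hz, neg_zero]
      exact M.zero_mem
    have hneg : -ℓ e ∈ M := hsat _ _ h1 h2
    exact hne e (hsharp _ (hmemM e) hneg)
  refine ⟨key, ?_⟩
  rw [injective_iff_map_eq_zero]
  intro γ hγ
  apply key
  have := DFunLike.congr_fun hγ γ
  simpa [periodMap, periodHom] using this


end TropicalNeron
end

section
/- Consider a tropical curve datum with G = ℤ and M = ℕ, so ℓ : E → ℤ satisfies ℓ(e) ≥ 1 for every edge e. Then every group homomorphism H₁ → ℤ has bounded monodromy, and the tropical Jacobian TroPic⁰ = Hom(H₁, ℤ)/{⟨γ, −⟩ : γ ∈ H₁} is a finite group. -/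
namespace TropicalNeron

variable {V E : Type*} [Fintype E]
variable {G : Type*} [AddCommGroup G]

/-- The submonoid `ℕ ⊆ ℤ` of nonnegative integers. -/
def intNonneg : AddSubmonoid ℤ where
  carrier := {x : ℤ | 0 ≤ x}
  zero_mem' := by simp [Set.mem_setOf_eq]
  add_mem' := fun {a b} ha hb => show 0 ≤ a + b from add_nonneg (show 0 ≤ a from ha) (show 0 ≤ b from hb)


section Aux
open scoped Classical

variable {E : Type*} [Fintype E]

lemma pairing_eq (ℓ γ γ' : E → ℤ) : pairing ℓ γ γ' = ∑ e, γ e * γ' e * ℓ e := by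
  simp [pairing, smul_eq_mul]

lemma pairing_comm (ℓ γ γ' : E → ℤ) : pairing ℓ γ γ' = pairing ℓ γ' γ := by
  simp [pairing_eq, mul_comm (γ _)]

lemma pairing_smul_left (ℓ γ γ' : E → ℤ) (n : ℤ) :
    pairing ℓ (n • γ) γ' = n * pairing ℓ γ γ' := by
  simp only [pairing_eq, Finset.mul_sum, Pi.smul_apply, smul_eq_mul]
  exact Finset.sum_congr rfl fun e _ => by ring

lemma pairing_sum_left {ι : Type*} (ℓ : E → ℤ) (s : Finset ι) (f : ι → E → ℤ) (γ' : E → ℤ) :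
    pairing ℓ (∑ i ∈ s, f i) γ' = ∑ i ∈ s, pairing ℓ (f i) γ' := by
  simp only [pairing_eq, Finset.sum_apply, Finset.sum_mul]
  rw [Finset.sum_comm]

lemma pairing_smul_right (ℓ γ γ' : E → ℤ) (n : ℤ) :
    pairing ℓ γ (n • γ') = n * pairing ℓ γ γ' := by
  rw [pairing_comm, pairing_smul_left, pairing_comm]

lemma pairing_sum_right {ι : Type*} (ℓ : E → ℤ) (s : Finset ι) (f : ι → E → ℤ) (γ : E → ℤ) :
    pairing ℓ γ (∑ i ∈ s, f i) = ∑ i ∈ s, pairing ℓ γ (f i) := by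
  rw [pairing_comm, pairing_sum_left]
  exact Finset.sum_congr rfl fun i _ => pairing_comm ..

lemma pairing_nonneg (ℓ : E → ℤ) (hℓ : ∀ e, 1 ≤ ℓ e) (γ : E → ℤ) : 0 ≤ pairing ℓ γ γ := by
  rw [pairing_eq]
  exact Finset.sum_nonneg fun e _ => mul_nonneg (mul_self_nonneg _) (by linarith [hℓ e])

lemma pairing_eq_zero (ℓ : E → ℤ) (hℓ : ∀ e, 1 ≤ ℓ e) (γ : E → ℤ)
    (h : pairing ℓ γ γ = 0) : γ = 0 := by
  rw [pairing_eq] at h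
  funext e
  have key := (Finset.sum_eq_zero_iff_of_nonneg
    (fun e _ => mul_nonneg (mul_self_nonneg (γ e)) (by linarith [hℓ e]))).mp h e
    (Finset.mem_univ e)
  have h1 := hℓ e
  simp only [Pi.zero_apply]
  nlinarith [mul_self_nonneg (γ e)]

lemma mem_intNonneg {x : ℤ} : x ∈ intNonneg ↔ 0 ≤ x := ⟨fun h => h, fun h => h⟩

set_option maxHeartbeats 1600000 in
/-- Key torsion lemma: for every `φ : H₁ → ℤ` there is a nonzero integer `n` and a cycle
`γ` with `⟨γ, −⟩ = n • φ`. -/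
lemma exists_period_eq_smul {V : Type*} (s t : E → V) (ℓ : E → ℤ) (hℓ : ∀ e, 1 ≤ ℓ e)
    (φ : ↥(H1 s t) →+ ℤ) :
    ∃ n : ℤ, n ≠ 0 ∧ ∃ γ : ↥(H1 s t), periodHom s t ℓ γ = n • φ := by
  classical
  set N : Submodule ℤ (E → ℤ) := AddSubgroup.toIntSubmodule (H1 s t) with hN
  haveI : Module.Finite ℤ ↥N := Module.Finite.iff_fg.mpr (IsNoetherian.noetherian N)
  haveI : Module.Free ℤ ↥N := Module.free_of_finite_type_torsion_free'
  set ι := Module.Free.ChooseBasisIndex ℤ ↥N with hι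
  set b : Module.Basis ι ℤ ↥N := Module.Free.chooseBasis ℤ ↥N with hb
  -- membership facts
  have memH1 : ∀ y : ↥N, (y : E → ℤ) ∈ H1 s t := fun y => y.2
  -- Gram matrix
  set A : Matrix ι ι ℤ := Matrix.of fun i j => pairing ℓ (b i) (b j) with hA
  have hsym : ∀ i j, A i j = A j i := fun i j => pairing_comm ..
  -- pairing of integer combinations against basis vectors
  have hcomb : ∀ (x : ι → ℤ) (j : ι),
      pairing ℓ (∑ i, x i • (b i : E → ℤ)) (b j) = A.mulVec x j := by
    intro x j
    rw [pairing_sum_left]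
    simp only [pairing_smul_left]
    rw [Matrix.mulVec, dotProduct]
    refine Finset.sum_congr rfl fun i _ => ?_
    rw [hsym j i]
    simp only [hA, Matrix.of_apply]
    ring
  -- determinant is nonzero
  have hdet : A.det ≠ 0 := by
    intro h0
    obtain ⟨v, hv, hAv⟩ := Matrix.exists_mulVec_eq_zero_iff.mpr h0
    set γ : E → ℤ := ∑ i, v i • (b i : E → ℤ) with hγ
    have hpz : pairing ℓ γ γ = 0 := by
      rw [hγ, pairing_sum_right]
      have : ∀ i, pairing ℓ γ (v i • (b i : E → ℤ)) = v i * A.mulVec v i := by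
        intro i
        rw [pairing_smul_right, hγ, hcomb]
      rw [Finset.sum_congr rfl fun i _ => this i]
      simp [hAv]
    have hγ0 : γ = 0 := pairing_eq_zero ℓ hℓ γ hpz
    have hsum : (∑ i, v i • b i : ↥N) = 0 := by
      apply Subtype.ext
      push_cast
      rw [← hγ0, hγ]
    have := linearIndependent_iff'.mp b.linearIndependent Finset.univ v ?_
    · exact hv (funext fun i => this i (Finset.mem_univ i))
    · simpa using hsum
  -- construct γ
  set c : ι → ℤ := fun i => φ ⟨(b i : E → ℤ), memH1 (b i)⟩ with hc
  set x : ι → ℤ := A.adjugate.mulVec c with hx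
  have hAx : A.mulVec x = A.det • c := by
    rw [hx, Matrix.mulVec_mulVec, Matrix.mul_adjugate, Matrix.smul_mulVec,
      Matrix.one_mulVec]
  set γf : E → ℤ := ∑ i, x i • (b i : E → ℤ) with hγf
  have hγfmem : γf ∈ H1 s t := by
    rw [hγf]
    exact sum_mem fun i _ => zsmul_mem (memH1 (b i)) _
  refine ⟨A.det, hdet, ⟨γf, hγfmem⟩, ?_⟩
  -- check equality of homomorphisms on all of H1
  ext γ'
  -- decompose γ' over the basis
  set γ'' : ↥N := ⟨(γ' : E → ℤ), γ'.2⟩ with hγ''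
  set r : ι → ℤ := fun j => b.repr γ'' j with hr
  have hdecomp : (γ' : E → ℤ) = ∑ j, r j • (b j : E → ℤ) := by
    have := b.sum_repr γ''
    calc (γ' : E → ℤ) = ((γ'' : ↥N) : E → ℤ) := rfl
      _ = ((∑ j, r j • b j : ↥N) : E → ℤ) := by rw [this]
      _ = ∑ j, r j • (b j : E → ℤ) := by push_cast; rfl
  have hφdecomp : φ γ' = ∑ j, r j * c j := by
    have hγ'sum : γ' = ∑ j, r j • (⟨(b j : E → ℤ), memH1 (b j)⟩ : ↥(H1 s t)) := by
      apply Subtype.ext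
      rw [hdecomp]
      push_cast
      rfl
    rw [hγ'sum, map_sum]
    refine Finset.sum_congr rfl fun j _ => ?_
    rw [map_zsmul, smul_eq_mul, hc]
  have hbasis : ∀ j, pairing ℓ γf (b j) = A.det * c j := by
    intro j
    rw [hγf, hcomb, hAx]
    simp [mul_comm]
  show pairing ℓ γf (γ' : E → ℤ) = (A.det • φ) γ'
  rw [hdecomp, pairing_sum_right]
  have : ∀ j ∈ Finset.univ, pairing ℓ γf (r j • (b j : E → ℤ)) = A.det * (r j * c j) := by
    intro j _
    rw [pairing_smul_right, hbasis]
    ring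
  rw [Finset.sum_congr rfl this, ← Finset.mul_sum, ← hφdecomp]
  simp [mul_comm]

end Aux

/-- For a tropical curve datum with `G = ℤ` and `M = ℕ` (so every edge length
satisfies `ℓ(e) ≥ 1`), every group homomorphism `H₁ → ℤ` has bounded monodromy, and the
tropical Jacobian `Hom(H₁,ℤ)/{⟨γ,−⟩ : γ ∈ H₁}` is a finite group. -/
theorem troPic0_finite_of_int {V E : Type*} [Fintype V] [Fintype E] [Nonempty V]
    (s t : E → V) (ℓ : E → ℤ) (hℓ : ∀ e, 1 ≤ ℓ e) :
    (∀ φ : ↥(H1 s t) →+ ℤ, BoundedMonodromy s t intNonneg ℓ φ) ∧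
      Finite (TroPic0 s t intNonneg ℓ) := by
  classical
  have part1 : ∀ φ : ↥(H1 s t) →+ ℤ, BoundedMonodromy s t intNonneg ℓ φ := by
    intro φ γ
    by_cases hγ : (γ : E → ℤ) = 0
    · have h0 : γ = 0 := Subtype.ext hγ
      exact ⟨0, 0, by simp [h0, mem_intNonneg], by simp [h0, mem_intNonneg]⟩
    · have hnn : 0 ≤ pairing ℓ (γ : E → ℤ) (γ : E → ℤ) := pairing_nonneg ℓ hℓ _
      have hne : pairing ℓ (γ : E → ℤ) (γ : E → ℤ) ≠ 0 :=
        fun h => hγ (pairing_eq_zero ℓ hℓ _ h)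
      have hp : 1 ≤ pairing ℓ (γ : E → ℤ) (γ : E → ℤ) := lt_of_le_of_ne hnn (Ne.symm hne)
      refine ⟨-|φ γ|, |φ γ|, ?_, ?_⟩
      · rw [mem_intNonneg]
        have h1 := neg_abs_le (φ γ)
        have h2 : |φ γ| * 1 ≤ |φ γ| * pairing ℓ (γ : E → ℤ) (γ : E → ℤ) :=
          mul_le_mul_of_nonneg_left hp (abs_nonneg _)
        simp only [smul_eq_mul, neg_mul]
        nlinarith
      · rw [mem_intNonneg]
        have h1 := le_abs_self (φ γ)
        have h2 : |φ γ| * 1 ≤ |φ γ| * pairing ℓ (γ : E → ℤ) (γ : E → ℤ) :=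
          mul_le_mul_of_nonneg_left hp (abs_nonneg _)
        simp only [smul_eq_mul]
        nlinarith
  refine ⟨part1, ?_⟩
  -- the full Hom group is finitely generated
  haveI : Module.Finite ℤ ↥(AddSubgroup.toIntSubmodule (H1 s t)) :=
    Module.Finite.iff_fg.mpr (IsNoetherian.noetherian _)
  haveI hMF : Module.Finite ℤ (↥(H1 s t) →+ ℤ) := by
    have e : (↥(H1 s t) →+ ℤ) ≃ₗ[ℤ] (↥(AddSubgroup.toIntSubmodule (H1 s t)) →ₗ[ℤ] ℤ) :=
      addMonoidHomLequivInt ℤ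
    exact Module.Finite.equiv e.symm
  have hFG : AddGroup.FG (↥(H1 s t) →+ ℤ) := Module.Finite.iff_addGroup_fg.mp hMF
  -- surjection onto the quotient
  let ψ : (↥(H1 s t) →+ ℤ) →+ ↥(BMHom s t intNonneg ℓ) :=
    { toFun := fun φ => ⟨φ, part1 φ⟩
      map_zero' := rfl
      map_add' := fun _ _ => rfl }
  let π : (↥(H1 s t) →+ ℤ) →+ TroPic0 s t intNonneg ℓ :=
    (QuotientAddGroup.mk' (periods s t intNonneg ℓ)).comp ψ
  have hπ : Function.Surjective π := by
    intro q
    obtain ⟨φ₀, rfl⟩ := QuotientAddGroup.mk'_surjective (periods s t intNonneg ℓ) q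
    refine ⟨(φ₀ : ↥(H1 s t) →+ ℤ), ?_⟩
    have hψ : ψ (φ₀ : ↥(H1 s t) →+ ℤ) = φ₀ := Subtype.ext rfl
    show (QuotientAddGroup.mk' (periods s t intNonneg ℓ)) (ψ (φ₀ : ↥(H1 s t) →+ ℤ)) = _
    rw [hψ]
  haveI hQFG : AddGroup.FG (TroPic0 s t intNonneg ℓ) := AddGroup.fg_of_surjective (f := π) hπ
  -- the quotient is torsion
  have htor : AddMonoid.IsTorsion (TroPic0 s t intNonneg ℓ) := by
    intro q
    obtain ⟨φ₀, rfl⟩ := QuotientAddGroup.mk'_surjective (periods s t intNonneg ℓ) q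
    obtain ⟨n, hn, γ, hγ⟩ := exists_period_eq_smul s t ℓ hℓ (φ₀ : ↥(H1 s t) →+ ℤ)
    rw [isOfFinAddOrder_iff_nsmul_eq_zero]
    refine ⟨n.natAbs, Int.natAbs_pos.mpr hn, ?_⟩
    have key : (n.natAbs : ℤ) • φ₀ ∈ periods s t intNonneg ℓ := by
      rcases Int.natAbs_eq n with he | he
      · refine AddSubgroup.mem_comap.mpr ⟨γ, ?_⟩
        show periodHom s t ℓ γ = ((n.natAbs : ℤ) • φ₀ : ↥(BMHom s t intNonneg ℓ)).1
        rw [hγ, ← he]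
        rfl
      · refine AddSubgroup.mem_comap.mpr ⟨-γ, ?_⟩
        show periodHom s t ℓ (-γ) = ((n.natAbs : ℤ) • φ₀ : ↥(BMHom s t intNonneg ℓ)).1
        have hneg : periodHom s t ℓ (-γ) = - periodHom s t ℓ γ := map_neg (periodMap s t ℓ) γ
        rw [hneg, hγ]
        conv_lhs => rw [he]
        rw [neg_smul, neg_neg]
        rfl
    have : (n.natAbs : ℤ) • QuotientAddGroup.mk' (periods s t intNonneg ℓ) φ₀ = 0 := by
      rw [← map_zsmul, QuotientAddGroup.mk'_apply, QuotientAddGroup.eq_zero_iff]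
      exact key
    simpa [natCast_zsmul] using this
  exact AddCommGroup.finite_of_fg_torsion _ htor

end TropicalNeron
end

section
/- Let (V, E, s, t, G, M, ℓ) be a tropical curve datum, and let G' be a finitely generated abelian group with a sharp, saturated, generating submonoid M' ⊆ G'. Let u : G → G' be a group homomorphism with u(M) ⊆ M' and u(ℓ(e)) ≠ 0 for every e ∈ E. Then postcomposition with u sends bounded-monodromy homomorphisms H₁ → G (with respect to M, ℓ) to bounded-monodromy homomorphisms H₁ → G' (with respect to M', u∘ℓ), sends ⟨γ, −⟩_ℓ to ⟨γ, −⟩_{u∘ℓ}, and hence induces a group homomorphism TroPic⁰(𝔛/M) → TroPic⁰(𝔛/M'); the kernel of this induced homomorphism is a free abelian group. -/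
namespace TropicalNeron

variable {V E : Type*} [Fintype E]
variable {G : Type*} [AddCommGroup G]

/-- `F` is the homomorphism of tropical Jacobians induced by postcomposition with `u`. -/
def IsInducedMap {V E : Type*} [Fintype E] {G G' : Type*} [AddCommGroup G] [AddCommGroup G']
    (s t : E → V) (M : AddSubmonoid G) (ℓ : E → G) (M' : AddSubmonoid G') (ℓ' : E → G')
    (u : G →+ G') (F : TroPic0 s t M ℓ →+ TroPic0 s t M' ℓ') : Prop :=
  ∀ (φ : ↥(BMHom s t M ℓ)) (ψ : ↥(BMHom s t M' ℓ')),
    (ψ : ↥(H1 s t) →+ G') = u.comp (φ : ↥(H1 s t) →+ G) →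
    F (QuotientAddGroup.mk φ) = QuotientAddGroup.mk ψ

/-- Sharp + saturated forces the ambient group to be torsion-free. -/
private lemma tf_aux {G : Type*} [AddCommGroup G] (M : AddSubmonoid G)
    (hsharp : ∀ g ∈ M, -g ∈ M → g = 0)
    (hsat : ∀ (g : G) (n : ℕ), 1 ≤ n → (n : ℤ) • g ∈ M → g ∈ M)
    {g : G} {c : ℤ} (hc : c ≠ 0) (h : c • g = 0) : g = 0 := by
  have h1 : ((c.natAbs : ℤ)) • g = 0 := by
    rcases Int.natAbs_eq c with he | he
    · rw [← he, h]
    · rw [show ((c.natAbs : ℤ)) = -c by omega, neg_smul, h, neg_zero]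
  have h2 : ((c.natAbs : ℤ)) • (-g) = 0 := by rw [smul_neg, h1, neg_zero]
  have hn : 1 ≤ c.natAbs := Int.natAbs_pos.mpr hc
  have hg : g ∈ M := hsat g c.natAbs hn (by rw [h1]; exact M.zero_mem)
  have hng : -g ∈ M := hsat (-g) c.natAbs hn (by rw [h2]; exact M.zero_mem)
  exact hsharp g hg hng

/-- In a sharp monoid, a finite sum of elements of the monoid is zero only if
each term is zero. -/
private lemma sum_eq_zero_sharp {G : Type*} [AddCommGroup G] {E : Type*} [Fintype E]
    (M : AddSubmonoid G) (hsharp : ∀ g ∈ M, -g ∈ M → g = 0)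
    (f : E → G) (hf : ∀ e, f e ∈ M) (h : ∑ e, f e = 0) : ∀ e, f e = 0 := by
  classical
  intro e
  apply hsharp _ (hf e)
  have hsum : f e + ∑ e' ∈ Finset.univ.erase e, f e' = 0 := by
    rw [Finset.add_sum_erase _ _ (Finset.mem_univ e)]; exact h
  rw [neg_eq_of_add_eq_zero_right hsum]
  exact AddSubmonoid.sum_mem _ (fun e' _ => hf e')

private lemma pairing_map {E : Type*} [Fintype E] {G G' : Type*} [AddCommGroup G]
    [AddCommGroup G'] (u : G →+ G') (ℓ : E → G) (γ γ' : E → ℤ) :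
    pairing (fun e => u (ℓ e)) γ γ' = u (pairing ℓ γ γ') := by
  simp [pairing, map_sum, map_zsmul]

/-- Lemma 6.2 of the paper: a homomorphism `u : G → G'` of monoids
(`u(M) ⊆ M'`) not contracting any edge (`u(ℓ(e)) ≠ 0`) sends bounded-monodromy
homomorphisms to bounded-monodromy homomorphisms, sends `⟨γ,−⟩_ℓ` to `⟨γ,−⟩_{u∘ℓ}`,
and induces a homomorphism `TroPic⁰(𝔛/M) → TroPic⁰(𝔛/M')` with free kernel. -/
theorem induced_map_free_kernel {V E : Type*} [Fintype V] [Fintype E] [Nonempty V]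
    {G G' : Type*} [AddCommGroup G] [AddCommGroup G']
    (s t : E → V) (M : AddSubmonoid G) (ℓ : E → G)
    (hG : AddGroup.FG G) (hdatum : IsTropicalCurveDatum s t M ℓ)
    (M' : AddSubmonoid G') (hG' : AddGroup.FG G')
    (hsharp' : ∀ g ∈ M', -g ∈ M' → g = 0)
    (hsat' : ∀ (g : G') (n : ℕ), 1 ≤ n → (n : ℤ) • g ∈ M' → g ∈ M')
    (hgen' : ∀ g : G', ∃ a ∈ M', ∃ b ∈ M', g = a - b)
    (u : G →+ G') (hu : ∀ x ∈ M, u x ∈ M') (hne : ∀ e, u (ℓ e) ≠ 0) :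
    (∀ φ : ↥(H1 s t) →+ G, BoundedMonodromy s t M ℓ φ →
        BoundedMonodromy s t M' (fun e => u (ℓ e)) (u.comp φ)) ∧
    (∀ γ : H1 s t, u.comp (periodHom s t ℓ γ) = periodHom s t (fun e => u (ℓ e)) γ) ∧
    ∃ F : TroPic0 s t M ℓ →+ TroPic0 s t M' (fun e => u (ℓ e)),
      IsInducedMap s t M ℓ M' (fun e => u (ℓ e)) u F ∧
      Module.Free ℤ ↥F.ker := by
  classical
  set ℓ' : E → G' := fun e => u (ℓ e) with hl'
  have part1 : ∀ φ : ↥(H1 s t) →+ G, BoundedMonodromy s t M ℓ φ →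
      BoundedMonodromy s t M' ℓ' (u.comp φ) := by
    intro φ hφ γ
    obtain ⟨n, m, h1, h2⟩ := hφ γ
    refine ⟨n, m, ?_, ?_⟩
    · have := hu _ h1
      simpa [hl', map_sub, map_zsmul, pairing_map] using this
    · have := hu _ h2
      simpa [hl', map_sub, map_zsmul, pairing_map] using this
  have part2 : ∀ γ : H1 s t, u.comp (periodHom s t ℓ γ) = periodHom s t ℓ' γ := by
    intro γ
    ext γ'
    simp [hl', periodHom, pairing_map]
  refine ⟨part1, part2, ?_⟩
  let uBM : ↥(BMHom s t M ℓ) →+ ↥(BMHom s t M' ℓ') :=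
    { toFun := fun φ => ⟨u.comp φ.1, part1 φ.1 φ.2⟩
      map_zero' := Subtype.ext (by ext γ; simp)
      map_add' := fun a b => Subtype.ext (by ext γ; simp) }
  have huBM : ∀ φ : ↥(BMHom s t M ℓ), ((uBM φ : ↥(BMHom s t M' ℓ')) : ↥(H1 s t) →+ G')
      = u.comp (φ : ↥(H1 s t) →+ G) := fun φ => rfl
  have hle : periods s t M ℓ ≤ (periods s t M' ℓ').comap uBM := by
    intro φ hφ
    rw [periods, AddSubgroup.mem_comap, AddMonoidHom.mem_range] at hφ
    obtain ⟨γ, hγ⟩ := hφ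
    rw [AddSubgroup.mem_comap, periods, AddSubgroup.mem_comap, AddMonoidHom.mem_range]
    refine ⟨γ, ?_⟩
    show periodHom s t ℓ' γ = (uBM φ : ↥(H1 s t) →+ G')
    rw [huBM, ← part2 γ]
    exact congrArg u.comp hγ
  refine ⟨QuotientAddGroup.map _ _ uBM hle, ?_, ?_⟩
  · intro φ ψ h
    have hψ : uBM φ = ψ := Subtype.ext (by rw [huBM, h])
    rw [QuotientAddGroup.map_mk, hψ]
  · -- freeness of the kernel
    set F := QuotientAddGroup.map (periods s t M ℓ) (periods s t M' ℓ') uBM hle with hF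
    have hGtf : ∀ {g : G} {c : ℤ}, c ≠ 0 → c • g = 0 → g = 0 :=
      fun hc h => tf_aux M hdatum.1 hdatum.2.1 hc h
    have hG'tf : ∀ {g : G'} {c : ℤ}, c ≠ 0 → c • g = 0 → g = 0 :=
      fun hc h => tf_aux M' hsharp' hsat' hc h
    -- torsion-freeness of the kernel
    have hker : ∀ x : TroPic0 s t M ℓ, x ∈ F.ker → ∀ c : ℤ, c ≠ 0 → c • x = 0 → x = 0 := by
      intro x hx c hc hcx
      obtain ⟨φ, rfl⟩ := QuotientAddGroup.mk'_surjective (periods s t M ℓ) x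
      rw [AddMonoidHom.mem_ker, QuotientAddGroup.mk'_apply, hF, QuotientAddGroup.map_mk,
        QuotientAddGroup.eq_zero_iff, periods, AddSubgroup.mem_comap,
        AddMonoidHom.mem_range] at hx
      obtain ⟨γ', hγ'⟩ := hx
      rw [← map_zsmul (QuotientAddGroup.mk' (periods s t M ℓ)) c φ,
        QuotientAddGroup.mk'_apply, QuotientAddGroup.eq_zero_iff, periods,
        AddSubgroup.mem_comap, AddMonoidHom.mem_range] at hcx
      obtain ⟨γ, hγ⟩ := hcx
      -- `hγ : periodMap γ = c • φ.1`, `hγ' : periodMap' γ' = u.comp φ.1`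
      have hγ1 : periodHom s t ℓ γ = c • (φ : ↥(H1 s t) →+ G) := by
        have h' := hγ
        rw [map_zsmul ((BMHom s t M ℓ).subtype) c φ] at h'
        exact h'
      have hγ'1 : periodHom s t ℓ' γ' = u.comp (φ : ↥(H1 s t) →+ G) := hγ'
      set δ : ↥(H1 s t) := γ - c • γ' with hδ
      have hcomp : u.comp (c • (φ : ↥(H1 s t) →+ G)) = c • u.comp (φ : ↥(H1 s t) →+ G) := by
        ext x; simp [AddMonoidHom.smul_apply]
      have hpp : periodHom s t ℓ' γ = periodHom s t ℓ' (c • γ') := by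
        have h1 : periodHom s t ℓ' γ = u.comp (periodHom s t ℓ γ) := (part2 γ).symm
        rw [h1, hγ1, hcomp, ← hγ'1]
        exact (map_zsmul (periodMap s t ℓ') c γ').symm
      have hper0 : periodHom s t ℓ' δ = 0 := by
        have hpp' : periodMap s t ℓ' γ = periodMap s t ℓ' (c • γ') := hpp
        have : periodMap s t ℓ' δ = 0 := by
          rw [hδ, map_sub, map_zsmul, hpp', map_zsmul, sub_self]
        exact this
      have hpair : pairing ℓ' (δ : E → ℤ) (δ : E → ℤ) = 0 := by
        have := congrArg (fun f => f δ) hper0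
        simpa [periodHom] using this
      have hterm : ∀ e, (((δ : E → ℤ) e) * ((δ : E → ℤ) e)) • ℓ' e = 0 := by
        refine sum_eq_zero_sharp M' hsharp' _ (fun e => ?_) hpair
        rw [← Int.natAbs_mul_self, natCast_zsmul]
        exact AddSubmonoid.nsmul_mem _ (hu _ (hdatum.2.2.2.1 e)) _
      have hδ0 : δ = 0 := by
        refine Subtype.ext (funext fun e => ?_)
        by_contra h0
        have h0' : ((δ : E → ℤ) e) ≠ 0 := by simpa using h0
        exact hne e (hG'tf (mul_ne_zero h0' h0') (hterm e))
      have hγeq : γ = c • γ' := by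
        have := hδ0
        rw [hδ, sub_eq_zero] at this
        exact this
      have hφper : (φ : ↥(H1 s t) →+ G) = periodHom s t ℓ γ' := by
        have hc2 : c • (φ : ↥(H1 s t) →+ G) = c • periodHom s t ℓ γ' := by
          rw [← hγ1, hγeq]
          exact map_zsmul (periodMap s t ℓ) c γ'
        ext γ₀
        have h3 : c • ((φ : ↥(H1 s t) →+ G) γ₀ - periodHom s t ℓ γ' γ₀) = 0 := by
          have := congrArg (fun f => f γ₀) hc2
          simp only [AddMonoidHom.smul_apply] at this
          rw [smul_sub, this, sub_self]
        exact sub_eq_zero.mp (hGtf hc h3)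
      rw [QuotientAddGroup.mk'_apply, QuotientAddGroup.eq_zero_iff, periods,
        AddSubgroup.mem_comap, AddMonoidHom.mem_range]
      exact ⟨γ', hφper.symm⟩
    -- finiteness
    have hGfin : Module.Finite ℤ G := Module.Finite.iff_addGroup_fg.mpr hG
    have hH1fin : Module.Finite ℤ ↥(H1 s t) :=
      Module.Finite.iff_fg.mpr (IsNoetherian.noetherian (R := ℤ) (H1 s t).toIntSubmodule)
    have hH1tf : NoZeroSMulDivisors ℤ ↥(H1 s t) := by
      constructor
      intro c x h
      have h2 : ((c • x : ↥(H1 s t)) : E → ℤ) = 0 := congrArg Subtype.val h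
      have hc : c • (x : E → ℤ) = 0 := by
        rwa [show ((c • x : ↥(H1 s t)) : E → ℤ) = c • (x : E → ℤ) from rfl] at h2
      rcases smul_eq_zero.mp hc with h | h
      · exact Or.inl h
      · exact Or.inr (Subtype.ext h)
    have hH1free : Module.Free ℤ ↥(H1 s t) := Module.free_of_finite_type_torsion_free'
    have hHomfin : Module.Finite ℤ (↥(H1 s t) →+ G) :=
      Module.Finite.equiv (addMonoidHomLequivInt (A := ↥(H1 s t)) (B := G) ℤ).symm
    have hBMfin : Module.Finite ℤ ↥(BMHom s t M ℓ) :=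
      Module.Finite.iff_fg.mpr (IsNoetherian.noetherian (R := ℤ) (BMHom s t M ℓ).toIntSubmodule)
    have hTPfin : Module.Finite ℤ (TroPic0 s t M ℓ) :=
      Module.Finite.of_surjective
        (QuotientAddGroup.mk' (periods s t M ℓ)).toIntLinearMap
        (QuotientAddGroup.mk'_surjective _)
    have hKfin : Module.Finite ℤ ↥F.ker :=
      Module.Finite.iff_fg.mpr (IsNoetherian.noetherian (R := ℤ) F.ker.toIntSubmodule)
    have hKtf : NoZeroSMulDivisors ℤ ↥F.ker := by
      constructor
      intro c x h
      by_cases hc : c = 0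
      · exact Or.inl hc
      · refine Or.inr (Subtype.ext ?_)
        have h2 : ((c • x : ↥F.ker) : TroPic0 s t M ℓ) = 0 := congrArg Subtype.val h
        have hcx : c • (x : TroPic0 s t M ℓ) = 0 := by
          rwa [show ((c • x : ↥F.ker) : TroPic0 s t M ℓ)
              = c • (x : TroPic0 s t M ℓ) from rfl] at h2
        exact hker _ x.2 c hc hcx
    exact Module.free_of_finite_type_torsion_free'


end TropicalNeron
end

section
/- Let (V, E, s, t) be a finite connected graph and consider the tropical curve datum with G = (E → ℤ), M = (E → ℕ), and ℓ(e) equal to the e-th standard basis vector, so that each edge is labelled by a distinct generator of the free monoid ℕ^E. Then the tropical Jacobian TroPic⁰ = Hom(H₁, ℤ^E)†/{⟨γ, −⟩ : γ ∈ H₁} is torsion-free. -/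
namespace TropicalNeron

variable {V E : Type*} [Fintype E]
variable {G : Type*} [AddCommGroup G]

/-- Connectedness of the graph: the equivalence relation generated by `s e ∼ t e` has a
single class. -/
def GraphConnected (s t : E → V) : Prop :=
  ∀ v w : V, Relation.EqvGen (fun a b => ∃ e, s e = a ∧ t e = b) v w

/-- The free monoid `ℕ^E ⊆ ℤ^E` of pointwise nonnegative integer-valued functions. -/
def piNonneg (E : Type*) : AddSubmonoid (E → ℤ) where
  carrier := {f | ∀ e, 0 ≤ f e}
  zero_mem' := fun e => le_refl 0
  add_mem' := fun hf hg e => add_nonneg (hf e) (hg e)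

section Aux

variable {V E : Type*} [Fintype V] [Fintype E]

open scoped Classical

/-- The pairing against the standard basis vectors is just pointwise product. -/
lemma pairing_single_apply [DecidableEq E] (γ γ' : E → ℤ) (e₀ : E) :
    pairing (fun e => (Pi.single e 1 : E → ℤ)) γ γ' e₀ = γ e₀ * γ' e₀ := by
  classical
  simp only [pairing, Finset.sum_apply, Pi.smul_apply, Pi.single_apply, smul_eq_mul,
    mul_ite, mul_one, mul_zero]
  rw [Finset.sum_eq_single e₀]
  · simp
  · intro b _ hb; exact if_neg fun h => hb h.symm
  · intro h; exact absurd (Finset.mem_univ e₀) h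

lemma delta_apply (s t : E → V) (γ : E → ℤ) (v : V) :
    delta s t γ v = (∑ e, if t e = v then γ e else 0) - ∑ e, if s e = v then γ e else 0 := rfl

lemma delta_single [DecidableEq E] (s t : E → V) (e : E) (k : ℤ) (v : V) :
    delta s t (Pi.single e k) v = (if t e = v then k else 0) - (if s e = v then k else 0) := by
  rw [delta_apply]
  congr 1 <;>
  · rw [Finset.sum_eq_single e]
    · simp
    · intro b _ hb; simp [Pi.single_apply, hb]
    · intro h; exact absurd (Finset.mem_univ e) h

/-- Pairing the boundary of a chain against a function on vertices. -/
lemma sum_delta_mul (s t : E → V) (γ : E → ℤ) (f : V → ℤ) :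
    ∑ v, delta s t γ v * f v = ∑ e, γ e * (f (t e) - f (s e)) := by
  have key : ∀ w : E → V,
      ∑ v, (∑ e, if w e = v then γ e else 0) * f v = ∑ e, γ e * f (w e) := by
    intro w
    have : ∀ v, (∑ e, if w e = v then γ e else 0) * f v
        = ∑ e, if w e = v then γ e * f v else 0 := by
      intro v
      rw [Finset.sum_mul]
      exact Finset.sum_congr rfl fun e _ => by by_cases h : w e = v <;> simp [h]
    simp_rw [this]
    rw [Finset.sum_comm]
    refine Finset.sum_congr rfl fun e _ => ?_
    rw [Finset.sum_ite_eq]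
    simp
  simp_rw [delta_apply, sub_mul, Finset.sum_sub_distrib, key, mul_sub]
  rw [← Finset.sum_sub_distrib]

/-- From a walk avoiding `e₀` we build an integer chain with boundary `1_b - 1_a`
vanishing at `e₀`. -/
lemma chain_of_walk [DecidableEq E] (s t : E → V) (e₀ : E) {a b : V}
    (h : Relation.EqvGen (fun x y => ∃ e, e ≠ e₀ ∧ s e = x ∧ t e = y) a b) :
    ∃ c : E → ℤ, c e₀ = 0 ∧
      ∀ v, delta s t c v = (if b = v then 1 else 0) - (if a = v then 1 else 0) := by
  induction h with
  | rel x y hxy =>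
      obtain ⟨e, he, hs, ht⟩ := hxy
      refine ⟨Pi.single e 1, by simp [Pi.single_apply, he], fun v => ?_⟩
      rw [delta_single, hs, ht]
  | refl x => exact ⟨0, rfl, fun v => by simp⟩
  | symm x y _ ih =>
      obtain ⟨c, hc0, hc⟩ := ih
      refine ⟨-c, by simp [hc0], fun v => ?_⟩
      rw [map_neg]
      simp [hc v]
  | trans x y z _ _ ih₁ ih₂ =>
      obtain ⟨c₁, hc₁0, hc₁⟩ := ih₁
      obtain ⟨c₂, hc₂0, hc₂⟩ := ih₂
      refine ⟨c₁ + c₂, by simp [hc₁0, hc₂0], fun v => ?_⟩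
      rw [map_add]
      simp only [Pi.add_apply, hc₁ v, hc₂ v]
      ring

/-- If a cycle is nonzero at `e`, then `s e` and `t e` are connected avoiding `e`. -/
lemma walk_of_cycle (s t : E → V) (e : E) (γ : E → ℤ) (hγ : γ ∈ H1 s t)
    (hne : γ e ≠ 0) :
    Relation.EqvGen (fun x y => ∃ e', e' ≠ e ∧ s e' = x ∧ t e' = y) (s e) (t e) := by
  classical
  by_contra hcon
  set R : V → V → Prop := fun x y => ∃ e', e' ≠ e ∧ s e' = x ∧ t e' = y with hR
  set f : V → ℤ := fun v => if Relation.EqvGen R (t e) v then 1 else 0 with hf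
  have hconst : ∀ x y, Relation.EqvGen R x y → f x = f y := by
    intro x y hxy
    simp only [hf]
    by_cases hx : Relation.EqvGen R (t e) x
    · rw [if_pos hx, if_pos (hx.trans _ _ _ hxy)]
    · rw [if_neg hx, if_neg (fun hy => hx (hy.trans _ _ _ (hxy.symm _ _)))]
  have hδ : delta s t γ = 0 := hγ
  have hsum : ∑ v, delta s t γ v * f v = 0 := by
    rw [hδ]; simp
  rw [sum_delta_mul] at hsum
  have hterm : ∀ e', e' ≠ e → γ e' * (f (t e') - f (s e')) = 0 := by
    intro e' he'
    have : f (s e') = f (t e') :=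
      hconst _ _ (Relation.EqvGen.rel _ _ ⟨e', he', rfl, rfl⟩)
    rw [← this]; ring
  rw [Finset.sum_eq_single e] at hsum
  · have hfte : f (t e) = 1 := by
      simp only [hf]
      rw [if_pos (Relation.EqvGen.refl _)]
    have hfse : f (s e) = 0 := by
      simp only [hf]
      rw [if_neg (fun h => hcon (h.symm _ _))]
    rw [hfte, hfse] at hsum
    simp only [sub_zero, mul_one] at hsum
    exact hne hsum
  · intro b _ hb; exact hterm b hb
  · intro h; exact absurd (Finset.mem_univ e) h

/-- If some cycle is nonzero at `e`, there is a cycle taking value `1` at `e`. -/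
lemma exists_cycle_one [DecidableEq E] (s t : E → V) (e : E) (γ : E → ℤ)
    (hγ : γ ∈ H1 s t) (hne : γ e ≠ 0) :
    ∃ γ₀ : E → ℤ, γ₀ ∈ H1 s t ∧ γ₀ e = 1 := by
  obtain ⟨c, hc0, hc⟩ := chain_of_walk s t e (walk_of_cycle s t e γ hγ hne)
  refine ⟨Pi.single e 1 - c, ?_, by simp [Pi.single_apply, hc0]⟩
  show delta s t _ = 0
  funext v
  rw [map_sub]
  simp only [Pi.sub_apply, delta_single, hc v, Pi.zero_apply]
  ring

end Aux

/-- the key step of Corollary 6.6 of the paper: for a finite connected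
graph with `G = ℤ^E`, `M = ℕ^E`, and each edge labelled by the corresponding standard
basis vector, the tropical Jacobian `Hom(H₁,ℤ^E)†/{⟨γ,−⟩ : γ ∈ H₁}` is torsion-free. -/
theorem troPic0_torsionFree_of_distinct_generators
    {V E : Type*} [Fintype V] [Fintype E] [Nonempty V] [DecidableEq E]
    (s t : E → V) (hconn : GraphConnected s t) :
    ∀ x : TroPic0 s t (piNonneg E) (fun e => (Pi.single e 1 : E → ℤ)),
      ∀ n : ℤ, n ≠ 0 → n • x = 0 → x = 0 := by
  classical
  set M : AddSubmonoid (E → ℤ) := piNonneg E with hM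
  set ℓ : E → (E → ℤ) := fun e => (Pi.single e 1 : E → ℤ) with hℓ
  intro x n hn hnx
  induction x using QuotientAddGroup.induction_on with
  | H φ =>
    have hmem : n • φ ∈ periods s t M ℓ := by
      rwa [← QuotientAddGroup.eq_zero_iff, QuotientAddGroup.mk_zsmul]
    rw [periods, AddSubgroup.mem_comap, AddMonoidHom.mem_range] at hmem
    obtain ⟨γ, hγ⟩ := hmem
    -- key identity: γ e * γ' e = n * φ γ' e for every cycle γ' and edge e
    have hkey : ∀ (γ' : H1 s t) (e : E), (γ : E → ℤ) e * (γ' : E → ℤ) e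
        = n * ((φ : ↥(H1 s t) →+ (E → ℤ)) γ' e) := by
      intro γ' e
      have h2 := congrArg (fun ψ : ↥(H1 s t) →+ (E → ℤ) => ψ γ' e) hγ
      simp only [periodMap, periodHom, AddMonoidHom.coe_mk, ZeroHom.coe_mk,
        AddSubgroup.coe_subtype, AddSubgroupClass.coe_zsmul, AddMonoidHom.smul_apply,
        Pi.smul_apply, smul_eq_mul] at h2
      rw [pairing_single_apply] at h2
      exact h2
    -- n divides every coordinate of γ
    have hdvd : ∀ e, n ∣ (γ : E → ℤ) e := by
      intro e
      by_cases hγe : (γ : E → ℤ) e = 0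
      · rw [hγe]; exact dvd_zero n
      · obtain ⟨γ₀, hγ₀H, hγ₀e⟩ := exists_cycle_one s t e (γ : E → ℤ) γ.2 hγe
        have := hkey ⟨γ₀, hγ₀H⟩ e
        rw [show ((⟨γ₀, hγ₀H⟩ : H1 s t) : E → ℤ) e = 1 from hγ₀e, mul_one] at this
        exact ⟨_, this⟩
    set γ'' : E → ℤ := fun e => (γ : E → ℤ) e / n with hγ''
    have hmul : ∀ e, n * γ'' e = (γ : E → ℤ) e := fun e => Int.mul_ediv_cancel' (hdvd e)
    have hγ''H1 : γ'' ∈ H1 s t := by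
      show delta s t γ'' = 0
      funext v
      have hsmul : (γ : E → ℤ) = n • γ'' := by
        funext e; rw [Pi.smul_apply, smul_eq_mul, hmul]
      have hδγ : delta s t (γ : E → ℤ) = 0 := γ.2
      rw [hsmul, map_zsmul] at hδγ
      have := congrFun hδγ v
      simp only [Pi.smul_apply, smul_eq_mul, Pi.zero_apply] at this ⊢
      exact (mul_eq_zero.mp this).resolve_left hn
    rw [QuotientAddGroup.eq_zero_iff]
    rw [periods, AddSubgroup.mem_comap, AddMonoidHom.mem_range]
    refine ⟨⟨γ'', hγ''H1⟩, ?_⟩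
    ext γ' e
    have h1 : pairing ℓ γ'' (γ' : E → ℤ) e = γ'' e * (γ' : E → ℤ) e :=
      pairing_single_apply _ _ _
    have h2 := hkey γ' e
    rw [← hmul e, mul_assoc] at h2
    have h3 : γ'' e * (γ' : E → ℤ) e = (φ : ↥(H1 s t) →+ (E → ℤ)) γ' e :=
      mul_left_cancel₀ hn h2
    simpa [periodMap, periodHom, h1] using h3

end TropicalNeron
end
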